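/- The finite support dual of the semi-infinite linear program infimize x₁ subject to x₁ + (1/i²)x₂ ≥ 2/i (i a positive integer) is infeasible: there is no finitely supported function u from the positive integers to ℝ with u(i) ≥ 0 for all i such that ∑_i u(i) = 1 and ∑_i (1/i²) u(i) = 0. Hence the finite support dual has value −∞ while the primal has value 0, i.e., there is an infinite duality gap with the finite support dual. -/

import Mathlib

theorem finite_support_dual_infeasible :
    (¬ ∃ u : ℕ+ → ℝ, {i | u i ≠ 0}.Finite ∧ (∀ i, 0 ≤ u i) ∧
        (∑ᶠ i : ℕ+, u i) = 1 ∧ (∑ᶠ i : ℕ+, (1 / ((i : ℕ) : ℝ) ^ 2) * u i) = 0) ∧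
    sSup {r : EReal | ∃ u : ℕ+ → ℝ, {i | u i ≠ 0}.Finite ∧ (∀ i, 0 ≤ u i) ∧
        (∑ᶠ i : ℕ+, u i) = 1 ∧ (∑ᶠ i : ℕ+, (1 / ((i : ℕ) : ℝ) ^ 2) * u i) = 0 ∧
        ((∑ᶠ i : ℕ+, (2 / ((i : ℕ) : ℝ)) * u i : ℝ) : EReal) = r} = ⊥ ∧
    sInf {r : ℝ | ∃ x : ℝ × ℝ,
      (∀ i : ℕ+, x.1 + (1 / ((i : ℕ) : ℝ) ^ 2) * x.2 ≥ 2 / ((i : ℕ) : ℝ)) ∧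
      x.1 = r} = 0 := by
  have hinf : ¬ ∃ u : ℕ+ → ℝ, {i | u i ≠ 0}.Finite ∧ (∀ i, 0 ≤ u i) ∧
      (∑ᶠ i : ℕ+, u i) = 1 ∧ (∑ᶠ i : ℕ+, (1 / ((i : ℕ) : ℝ) ^ 2) * u i) = 0 := by
    rintro ⟨u, hfin, hpos, hsum, hzero⟩
    have hu : ∀ j : ℕ+, u j = 0 := by
      intro j
      have hfin2 : (Function.support fun i : ℕ+ => (1 / ((i : ℕ) : ℝ) ^ 2) * u i).Finite := by
        apply hfin.subset
        intro i hi
        simp only [Function.mem_support] at hi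
        intro h0
        exact hi (by rw [h0, mul_zero])
      have hle : (1 / ((j : ℕ) : ℝ) ^ 2) * u j ≤
          ∑ᶠ i : ℕ+, (1 / ((i : ℕ) : ℝ) ^ 2) * u i := by
        apply single_le_finsum j hfin2
        intro i
        exact mul_nonneg (by positivity) (hpos i)
      rw [hzero] at hle
      have hjpos : (0:ℝ) < ((j : ℕ) : ℝ) ^ 2 := by
        have : (0:ℝ) < ((j : ℕ) : ℝ) := by exact_mod_cast j.pos
        positivity
      have h1 : (0:ℝ) < 1 / ((j : ℕ) : ℝ) ^ 2 := by positivity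
      nlinarith [hpos j]
    have : (∑ᶠ i : ℕ+, u i) = 0 := by
      have : u = 0 := funext hu
      rw [this]; simp
    rw [this] at hsum; norm_num at hsum
  refine ⟨hinf, ?_, ?_⟩
  · have : {r : EReal | ∃ u : ℕ+ → ℝ, {i | u i ≠ 0}.Finite ∧ (∀ i, 0 ≤ u i) ∧
        (∑ᶠ i : ℕ+, u i) = 1 ∧ (∑ᶠ i : ℕ+, (1 / ((i : ℕ) : ℝ) ^ 2) * u i) = 0 ∧
        ((∑ᶠ i : ℕ+, (2 / ((i : ℕ) : ℝ)) * u i : ℝ) : EReal) = r} = ∅ := by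
      ext r
      simp only [Set.mem_setOf_eq, Set.mem_empty_iff_false, iff_false]
      rintro ⟨u, h1, h2, h3, h4, _⟩
      exact hinf ⟨u, h1, h2, h3, h4⟩
    rw [this, sSup_empty]
  · set S := {r : ℝ | ∃ x : ℝ × ℝ,
      (∀ i : ℕ+, x.1 + (1 / ((i : ℕ) : ℝ) ^ 2) * x.2 ≥ 2 / ((i : ℕ) : ℝ)) ∧
      x.1 = r} with hS
    have hmem : ∀ ε : ℝ, 0 < ε → ε ∈ S := by
      intro ε hε
      refine ⟨(ε, 1/ε), ?_, rfl⟩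
      intro i
      have hi : (1:ℝ) ≤ ((i : ℕ) : ℝ) := by exact_mod_cast i.one_le
      have hi0 : (0:ℝ) < ((i : ℕ) : ℝ) := by linarith
      rw [ge_iff_le, div_le_iff₀ hi0]
      have hsq : (0:ℝ) ≤ (ε * ((i : ℕ) : ℝ) - 1)^2 := sq_nonneg _
      have hprod : (1 / ((i : ℕ) : ℝ) ^ 2 * (1/ε)) * (((i : ℕ) : ℝ)^2 * ε) = 1 := by
        field_simp
      have hnn : (0:ℝ) ≤ 1 / ((i : ℕ) : ℝ) ^ 2 * (1/ε) := by positivity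
      nlinarith [mul_pos hi0 hε, mul_pos (mul_pos hi0 hi0) hε]
    have hlb : ∀ r ∈ S, (0:ℝ) ≤ r := by
      rintro r ⟨x, hx, rfl⟩
      have htend : Filter.Tendsto
          (fun n : ℕ => 2 / ((n:ℝ) + 1) - (1 / ((n:ℝ) + 1) ^ 2) * x.2)
          Filter.atTop (nhds 0) := by
        have h1 : Filter.Tendsto (fun n : ℕ => 1 / ((n:ℝ) + 1)) Filter.atTop (nhds 0) :=
          tendsto_one_div_add_atTop_nhds_zero_nat
        have h2 : Filter.Tendsto (fun n : ℕ => 2 / ((n:ℝ) + 1)) Filter.atTop (nhds 0) := by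
          have := h1.const_mul (2:ℝ)
          simpa [mul_one_div, div_eq_mul_inv] using this
        have h3 : Filter.Tendsto (fun n : ℕ => (1 / ((n:ℝ) + 1) ^ 2) * x.2)
            Filter.atTop (nhds 0) := by
          have := (h1.mul h1).mul_const x.2
          simpa [one_div, mul_inv, pow_two] using this
        simpa using h2.sub h3
      refine le_of_tendsto' htend ?_
      intro n
      have h : 2/((n:ℝ)+1) ≤ x.1 + 1/((n:ℝ)+1)^2 * x.2 := by
        have h0 : x.1 + 1 / (((n + 1 : ℕ) : ℝ)) ^ 2 * x.2 ≥ 2 / (((n + 1 : ℕ) : ℝ)) :=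
          hx ⟨n + 1, Nat.succ_pos n⟩
        rw [ge_iff_le] at h0
        push_cast at h0
        exact h0
      linarith
    have hne : S.Nonempty := ⟨1, hmem 1 one_pos⟩
    have hbdd : BddBelow S := ⟨0, hlb⟩
    apply le_antisymm
    · refine le_of_forall_pos_le_add ?_
      intro ε hε
      have := csInf_le hbdd (hmem ε hε)
      linarith
    · exact le_csInf hne hlb
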